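/- Let X be a Banach lattice admitting a strong norm unit e ∈ X⁺ (‖e‖ = 1 and ‖x‖ ≤ 1 implies |x| ≤ e), and let ρ be a Riesz pseudonorm on X. Let Y be a normed lattice and ρ' a Riesz seminorm on Y that is finer than the norm, i.e., ‖y‖ ≤ ρ'(y) for all y ∈ Y⁺. If T : X → Y is pseudo-semicompact with respect to ρ and ρ' (for every B ⊆ X with sup_{x∈B} ρ(x) < ∞ the image T(B) is almost pseudo-bounded in Y w.r.t. ρ'), then T is semicompact: for every ε > 0 there exists u ∈ Y⁺ such that ‖(|T x| − u)⁺‖ ≤ ε for all x ∈ X with ‖x‖ ≤ 1. -/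

import Mathlib

set_option maxHeartbeats 1000000


open Filter Topology Pointwise

/-- Let `X` be a Banach lattice with a strong norm unit `e`, `ρ` a Riesz
pseudonorm on `X`, `Y` a normed lattice and `ρ'` a Riesz seminorm on `Y` finer than the
norm. If `T : X → Y` is pseudo-semicompact with respect to `ρ` and `ρ'`, then `T` is
semicompact. -/
theorem stmt_19 {X : Type*} [NormedAddCommGroup X] [Lattice X] [HasSolidNorm X]
    [IsOrderedAddMonoid X] [CompleteSpace X]
    [NormedSpace ℝ X]
    {Y : Type*} [NormedAddCommGroup Y] [Lattice Y] [HasSolidNorm Y]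
    [IsOrderedAddMonoid Y] [NormedSpace ℝ Y]
    (e : X) (he0 : 0 ≤ e) (he1 : ‖e‖ = 1) (heunit : ∀ x : X, ‖x‖ ≤ 1 → |x| ≤ e)
    (ρ : X → ℝ)
    (hnonneg : ∀ x : X, 0 ≤ ρ x)
    (hsub : ∀ x y : X, ρ (x + y) ≤ ρ x + ρ y)
    (htend : ∀ x : X, Tendsto (fun θ : ℝ => ρ (θ • x)) (𝓝 0) (𝓝 0))
    (hmono : ∀ x y : X, |x| ≤ |y| → ρ x ≤ ρ y)
    (ρ' : Y → ℝ)
    (h'hom : ∀ (c : ℝ) (y : Y), ρ' (c • y) = |c| * ρ' y)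
    (h'sub : ∀ y z : Y, ρ' (y + z) ≤ ρ' y + ρ' z)
    (h'mono : ∀ y z : Y, |y| ≤ |z| → ρ' y ≤ ρ' z)
    (h'finer : ∀ y : Y, 0 ≤ y → ‖y‖ ≤ ρ' y)
    (T : X → Y)
    (hTsc : ∀ B : Set X, (∃ M : ℝ, ∀ x ∈ B, ρ x ≤ M) →
      ∀ ε : ℝ, 0 < ε → ∃ a b : Y, a ≤ b ∧
        T '' B ⊆ Set.Icc a b + ε • {y : Y | ρ' y ≤ 1}) :
    ∀ ε : ℝ, 0 < ε → ∃ u : Y, 0 ≤ u ∧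
      ∀ x : X, ‖x‖ ≤ 1 → ‖(|T x| - u) ⊔ 0‖ ≤ ε := by
  intro ε hε
  obtain ⟨a, b, hab, hsub'⟩ := hTsc {x : X | ‖x‖ ≤ 1}
    ⟨ρ e, fun x hx => hmono x e (by simpa [abs_of_nonneg he0] using heunit x hx)⟩ ε hε
  refine ⟨|a| ⊔ |b|, le_sup_of_le_left (abs_nonneg a), fun x hx => ?_⟩
  obtain ⟨c, hc, w', hw', hcw⟩ := hsub' ⟨x, hx, rfl⟩
  obtain ⟨w, hw, rfl⟩ := hw'
  have hw1 : ρ' w ≤ 1 := hw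
  have hcw' : c + ε • w = T x := hcw
  have hcabs : |c| ≤ |a| ⊔ |b| :=
    sup_le (le_sup_of_le_right (hc.2.trans (le_abs_self b)))
      (le_sup_of_le_left ((neg_le_neg hc.1).trans (neg_le_abs a)))
  have key : (|T x| - (|a| ⊔ |b|)) ⊔ 0 ≤ |ε • w| := by
    refine sup_le ?_ (abs_nonneg _)
    rw [sub_le_iff_le_add]
    calc |T x| = |c + ε • w| := by rw [hcw']
    _ ≤ |c| + |ε • w| := abs_add_le _ _
    _ ≤ |ε • w| + (|a| ⊔ |b|) := by rw [add_comm]; exact add_le_add_right hcabs _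
  calc ‖(|T x| - (|a| ⊔ |b|)) ⊔ 0‖ ≤ ‖|ε • w|‖ := by
        apply norm_le_norm_of_abs_le_abs
        rw [abs_of_nonneg (le_sup_right), abs_abs]
        exact key
    _ ≤ ρ' |ε • w| := h'finer _ (abs_nonneg _)
    _ ≤ ρ' (ε • w) := h'mono _ _ (by rw [abs_abs])
    _ = ε * ρ' w := by rw [h'hom, abs_of_nonneg hε.le]
    _ ≤ ε * 1 := mul_le_mul_of_nonneg_left hw1 hε.le
    _ = ε := mul_one ε
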